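/- Let n ≥ 2 and let S ⊆ [0,1]^n be a set not containing two elements x, y with x_i ≤ y_i for all i ∈ {1,...,n}. Then the Hausdorff dimension of S is at most n - 1. -/

import Mathlib

open MeasureTheory
open scoped ENNReal

lemma stmt3_comp_le {n : ℕ} (a b : EuclideanSpace ℝ (Fin n)) (i : Fin n) :
    dist (a i) (b i) ≤ dist a b := by
  rw [EuclideanSpace.dist_eq]
  have h : dist (a i) (b i) ^ 2 ≤ ∑ j, dist (a j) (b j) ^ 2 :=
    Finset.single_le_sum (f := fun j => dist (a j) (b j) ^ 2)
      (fun j _ => sq_nonneg _) (Finset.mem_univ i)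
  calc dist (a i) (b i) = Real.sqrt (dist (a i) (b i) ^ 2) := (Real.sqrt_sq dist_nonneg).symm
    _ ≤ _ := Real.sqrt_le_sqrt h

theorem stmt_3 (n : ℕ) (hn : 2 ≤ n)
    (S : Set (EuclideanSpace ℝ (Fin n)))
    (hScube : ∀ x ∈ S, ∀ i, x i ∈ Set.Icc (0 : ℝ) 1)
    (hanti : ∀ x ∈ S, ∀ y ∈ S, (∀ i, x i ≤ y i) → x = y) :
    dimH S ≤ (n : ℝ≥0∞) - 1 := by
  have hnpos : 0 < n := by omega
  set i0 : Fin n := ⟨0, hnpos⟩ with hi0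
  let φ : EuclideanSpace ℝ (Fin n) →ₗ[ℝ] ℝ :=
    { toFun := fun x => x i0
      map_add' := fun x y => rfl
      map_smul' := fun c x => rfl }
  set H : Submodule ℝ (EuclideanSpace ℝ (Fin n)) := LinearMap.ker φ with hH
  let f : EuclideanSpace ℝ (Fin n) → EuclideanSpace ℝ (Fin n) := fun x => WithLp.toLp 2 (fun i => x i - x i0)
  let g : ↥S → EuclideanSpace ℝ (Fin n) := fun x => f x.val
  -- g is antilipschitz
  have hg : AntilipschitzWith ((2 * n : ℕ) : NNReal) g := by
    apply AntilipschitzWith.of_le_mul_dist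
    intro x y
    set d : ℝ := dist (g x) (g y) with hd
    have hd0 : 0 ≤ d := dist_nonneg
    have hcomp : ∀ i : Fin n, |(x.val i - x.val i0) - (y.val i - y.val i0)| ≤ d := by
      intro i
      have := stmt3_comp_le (g x) (g y) i
      rwa [Real.dist_eq] at this
    have hK : (((2 * n : ℕ) : NNReal) : ℝ) = 2 * (n : ℝ) := by push_cast; ring
    rw [Subtype.dist_eq, hK]
    set t : ℝ := x.val i0 - y.val i0 with ht
    rcases le_or_gt d t with hcase | hcase
    · -- y ≤ x coordinatewise, so x = y
      have hle : ∀ i, y.val i ≤ x.val i := by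
        intro i
        have h1 := (abs_le.1 (hcomp i)).1
        nlinarith
      have : y.val = x.val := hanti y.val y.2 x.val x.2 hle
      have hxy : x = y := Subtype.ext this.symm
      rw [hxy]
      simp
      positivity
    rcases le_or_gt t (-d) with hcase2 | hcase2
    · have hle : ∀ i, x.val i ≤ y.val i := by
        intro i
        have h1 := (abs_le.1 (hcomp i)).2
        nlinarith
      have : x.val = y.val := hanti x.val x.2 y.val y.2 hle
      have hxy : x = y := Subtype.ext this
      rw [hxy]
      simp
      positivity
    · -- |t| < d, so each coordinate differs by at most 2d
      have hci : ∀ i, dist (x.val i) (y.val i) ≤ 2 * d := by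
        intro i
        rw [Real.dist_eq]
        have h1 := abs_le.1 (hcomp i)
        rw [abs_le]
        constructor <;> nlinarith [h1.1, h1.2]
      have : dist x.val y.val ≤ Real.sqrt (∑ _j : Fin n, (2 * d) ^ 2) := by
        rw [EuclideanSpace.dist_eq]
        apply Real.sqrt_le_sqrt
        apply Finset.sum_le_sum
        intro j _
        have := hci j
        nlinarith [dist_nonneg (x := x.val j) (y := y.val j)]
      calc dist x.val y.val ≤ Real.sqrt (∑ _j : Fin n, (2 * d) ^ 2) := this
        _ = Real.sqrt ((n : ℝ) * (2 * d) ^ 2) := by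
            rw [Finset.sum_const, Finset.card_univ, Fintype.card_fin]; simp [nsmul_eq_mul]
        _ = Real.sqrt (n : ℝ) * (2 * d) := by
            rw [Real.sqrt_mul (by positivity)]
            rw [Real.sqrt_sq (by positivity)]
        _ ≤ (n : ℝ) * (2 * d) := by
            have h1 : Real.sqrt (n : ℝ) ≤ (n : ℝ) := by
              have := Real.sqrt_le_sqrt (show (n : ℝ) ≤ (n : ℝ) ^ 2 by nlinarith [Nat.one_le_cast (α := ℝ) |>.2 (show 1 ≤ n by omega)])
              calc Real.sqrt (n : ℝ) ≤ Real.sqrt ((n : ℝ) ^ 2) := this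
                _ = (n : ℝ) := Real.sqrt_sq (by positivity)
            nlinarith
        _ = 2 * (n : ℝ) * d := by ring
  -- dimension chain
  have h1 : dimH S = dimH (Set.univ : Set ↥S) := by
    conv_lhs => rw [← Subtype.coe_image_univ S]
    exact isometry_subtype_coe.dimH_image _
  have h2 : dimH (Set.univ : Set ↥S) ≤ dimH (g '' Set.univ) := hg.le_dimH_image _
  have h3 : g '' Set.univ ⊆ (H : Set (EuclideanSpace ℝ (Fin n))) := by
    rintro _ ⟨x, -, rfl⟩
    show φ (f x.val) = 0
    show x.val i0 - x.val i0 = 0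
    ring
  haveI : FiniteDimensional ℝ ↥H := FiniteDimensional.finiteDimensional_submodule H
  have h4 : dimH (H : Set (EuclideanSpace ℝ (Fin n))) = (Module.finrank ℝ ↥H : ℝ≥0∞) := by
    conv_lhs => rw [← Subtype.coe_image_univ (H : Set (EuclideanSpace ℝ (Fin n)))]
    rw [isometry_subtype_coe.dimH_image, Real.dimH_univ_eq_finrank]
    rfl
  have hφsurj : Function.Surjective φ := by
    intro c
    refine ⟨EuclideanSpace.single i0 c, ?_⟩
    show EuclideanSpace.single i0 c i0 = c
    simp [EuclideanSpace.single_apply]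
  have hrank : Module.finrank ℝ ↥H = n - 1 := by
    have hrn := LinearMap.finrank_range_add_finrank_ker φ
    rw [LinearMap.range_eq_top.2 hφsurj, finrank_top] at hrn
    rw [Module.finrank_self, finrank_euclideanSpace_fin] at hrn
    rw [hH]
    omega
  have hcast : ((n - 1 : ℕ) : ℝ≥0∞) = (n : ℝ≥0∞) - 1 := by
    rw [ENNReal.natCast_sub]
    norm_num
  calc dimH S = dimH (Set.univ : Set ↥S) := h1
    _ ≤ dimH (g '' Set.univ) := h2
    _ ≤ dimH (H : Set (EuclideanSpace ℝ (Fin n))) := dimH_mono h3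
    _ = (Module.finrank ℝ ↥H : ℝ≥0∞) := h4
    _ = ((n - 1 : ℕ) : ℝ≥0∞) := by rw [hrank]
    _ = (n : ℝ≥0∞) - 1 := hcast
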